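/- arXiv:1509.06994 — 5 statements merged into one kernel-verified Lean document; each statement's English description precedes it below -/
import Mathlib

section
/- Suppose that for a stationary random simple graph on ℤ with degree distribution F, the expected total length T of the edges at the origin is finite. Then F has finite second moment. -/
open MeasureTheory ENNReal

lemma key_sum_bound (S : Finset ℤ) (h : 0 ∉ S) :
    S.card ^ 2 ≤ 4 * ∑ j ∈ S, j.natAbs + 1 := by
  induction S using Finset.strongInduction with
  | _ S ih =>
    rcases S.eq_empty_or_nonempty with rfl | hne
    · simp
    · obtain ⟨j, hj, hjmax⟩ := S.exists_max_image (fun x => x.natAbs) hne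
      have h0 : 0 ∉ S.erase j := fun hx => h (Finset.mem_of_mem_erase hx)
      have ih' := ih (S.erase j) (Finset.erase_ssubset hj) h0
      have hcard : (S.erase j).card = S.card - 1 := Finset.card_erase_of_mem hj
      have hn : S.card ≤ 2 * j.natAbs := by
        have hsub : S ⊆ (Finset.Icc (-(j.natAbs : ℤ)) (j.natAbs : ℤ)).erase 0 := by
          intro x hx
          refine Finset.mem_erase.mpr ⟨?_, ?_⟩
          · rintro rfl; exact h hx
          · have := hjmax x hx
            rw [Finset.mem_Icc]
            omega
        have h1 : ((Finset.Icc (-(j.natAbs : ℤ)) (j.natAbs : ℤ)).erase 0).card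
            = 2 * j.natAbs := by
          rw [Finset.card_erase_of_mem (by
            rw [Finset.mem_Icc]; omega), Int.card_Icc]
          omega
        calc S.card ≤ _ := Finset.card_le_card hsub
          _ = 2 * j.natAbs := h1
      have hsum : ∑ x ∈ S, x.natAbs = j.natAbs + ∑ x ∈ S.erase j, x.natAbs :=
        (Finset.add_sum_erase S _ hj).symm
      obtain ⟨m, hm⟩ : ∃ m, S.card = m + 1 :=
        ⟨S.card - 1, by have := hne.card_pos; omega⟩
      rw [hm, hsum]
      rw [hcard, hm] at ih'
      simp only [Nat.add_sub_cancel] at ih'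
      have hx : (m + 1) ^ 2 = m ^ 2 + 2 * m + 1 := by ring
      rw [hx]
      have h2 : 2 * m + 2 ≤ 4 * j.natAbs := by omega
      linarith

/-- If, for a random simple graph on ℤ, the expected total length of the edges at
the origin is finite, then the degree of the origin has finite second moment. -/
theorem stmt4 {Ω : Type*} [MeasurableSpace Ω] (ℙ : Measure Ω) [IsProbabilityMeasure ℙ]
    (G : Ω → SimpleGraph ℤ)
    (D : Ω → ℕ) (hD : ∀ ω, (D ω : ℕ∞) = ((G ω).neighborSet 0).encard)
    (T : Ω → ℝ≥0∞) (hT : ∀ ω, T ω = ∑' j : ((G ω).neighborSet 0), ((j : ℤ).natAbs : ℝ≥0∞))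
    (hTfin : ∫⁻ ω, T ω ∂ℙ < ∞) :
    ∫⁻ ω, ((D ω : ℝ≥0∞)) ^ 2 ∂ℙ < ∞ := by
  have hpt : ∀ ω, ((D ω : ℝ≥0∞)) ^ 2 ≤ 4 * T ω + 1 := by
    intro ω
    have hfin : ((G ω).neighborSet 0).Finite :=
      Set.finite_of_encard_eq_coe (hD ω).symm
    set t : Finset ℤ := hfin.toFinset with ht
    have hcard : D ω = t.card := by
      have h1 : (D ω : ℕ∞) = (t.card : ℕ∞) := by
        rw [hD ω, hfin.encard_eq_coe_toFinset_card]
      exact_mod_cast h1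
    have h0 : (0 : ℤ) ∉ t := by
      simp only [ht, Set.Finite.mem_toFinset, SimpleGraph.mem_neighborSet]
      exact fun hadj => (G ω).irrefl hadj
    have hTS : T ω = ∑ j ∈ t, ((j.natAbs : ℝ≥0∞)) := by
      rw [hT ω]
      have hset : ((G ω).neighborSet 0) = (t : Set ℤ) := by
        simp [ht]
      rw [hset]; exact Finset.tsum_subtype' t (fun z => ((z.natAbs : ℝ≥0∞)))
    have hkey := key_sum_bound t h0
    rw [hcard] at *
    rw [hTS]
    have hc : ((∑ j ∈ t, (j.natAbs : ℝ≥0∞))) = ((∑ j ∈ t, j.natAbs : ℕ) : ℝ≥0∞) := by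
      push_cast; rfl
    rw [hc]
    calc ((t.card : ℝ≥0∞)) ^ 2 = ((t.card ^ 2 : ℕ) : ℝ≥0∞) := by push_cast; ring
      _ ≤ ((4 * ∑ j ∈ t, j.natAbs + 1 : ℕ) : ℝ≥0∞) := by exact_mod_cast hkey
      _ = 4 * ((∑ j ∈ t, j.natAbs : ℕ) : ℝ≥0∞) + 1 := by push_cast; ring
  calc ∫⁻ ω, ((D ω : ℝ≥0∞)) ^ 2 ∂ℙ ≤ ∫⁻ ω, (4 * T ω + 1) ∂ℙ :=
        lintegral_mono fun ω => hpt ω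
    _ = 4 * ∫⁻ ω, T ω ∂ℙ + 1 := by
        rw [lintegral_add_right _ measurable_const,
          lintegral_const_mul' _ _ (by norm_num : (4 : ℝ≥0∞) ≠ ⊤),
          lintegral_const, measure_univ, mul_one]
    _ < ⊤ := by
        have : (4 : ℝ≥0∞) * ∫⁻ ω, T ω ∂ℙ < ⊤ :=
          ENNReal.mul_lt_top (by norm_num) hTfin
        exact ENNReal.add_lt_top.mpr ⟨this, ENNReal.one_lt_top⟩
end

section
/- Fix d ≥ 1 and a configuration (D_i^d)_{i∈ℤ} of non-negative integers ('bad stubs'). Say vertex i is claimed if Σ_{k=i−m}^{i+m} D_k^d ≥ m for some m ≥ 1. Let C = {i+1, …, i+n} be a cluster of claimed vertices, i.e., all of i+1,…,i+n are claimed but i and i+n+1 are not claimed. Then Σ_{k∈C} D_k^d ≤ n − 1 = |C| − 1. -/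
/-- In a cluster of claimed vertices, the total number of bad stubs is at most
the cluster size minus one. -/
theorem stmt8 (d : ℕ) (hd : 1 ≤ d) (D : ℤ → ℕ)
    (claimed : ℤ → Prop)
    (hcl : ∀ i : ℤ, claimed i ↔
      ∃ m : ℕ, 1 ≤ m ∧ m ≤ ∑ k ∈ Finset.Icc (i - (m : ℤ)) (i + (m : ℤ)), D k)
    (i : ℤ) (n : ℕ) (hn : 1 ≤ n)
    (hC : ∀ j ∈ Finset.Icc (i + 1) (i + (n : ℤ)), claimed j)
    (hi : ¬ claimed i) (hin : ¬ claimed (i + (n : ℤ) + 1)) :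
    ∑ k ∈ Finset.Icc (i + 1) (i + (n : ℤ)), D k ≤ n - 1 := by
  by_contra h
  push_neg at h
  have hsum : n ≤ ∑ k ∈ Finset.Icc (i + 1) (i + (n : ℤ)), D k := by omega
  apply hi
  rw [hcl]
  refine ⟨n, hn, le_trans hsum ?_⟩
  apply Finset.sum_le_sum_of_subset
  intro x hx
  simp only [Finset.mem_Icc] at *
  omega
end

section
/- Fix α > 0, d ≥ 1, and a configuration (D_i^d)_{i∈ℤ} of non-negative reals. Say vertex i is α-claimed if Σ_{k=i−m}^{i+m} D_k^d ≥ α m for some m ≥ 1. If the α-claimed cluster of the origin (the maximal interval of consecutive α-claimed vertices containing 0) has size at least n, then there exists m ≥ n with Σ_{k=−m}^{m} D_k^d ≥ α m / 6. -/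
namespace Stmt9Aux

open Finset

def rch (p : ℤ × ℤ) : ℤ := p.1 + p.2
def lo (p : ℤ × ℤ) : ℤ := p.1 - p.2

def Mx (a : ℤ) : List (ℤ × ℤ) → ℤ
  | [] => a - 1
  | p :: _ => rch p

def Lx (a : ℤ) : List (ℤ × ℤ) → ℤ
  | [] => a
  | p :: r => min (lo p) (Lx a r)

def ssum : List (ℤ × ℤ) → ℤ
  | [] => 0
  | p :: r => p.2 + ssum r

def sAB : List (ℤ × ℤ) → ℤ × ℤ
  | [] => (0, 0)
  | p :: r => ((sAB r).2 + p.2, (sAB r).1)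

def massOK (α : ℝ) (D : ℤ → ℝ) (p : ℤ × ℤ) : Prop :=
  1 ≤ p.2 ∧ α * p.2 ≤ ∑ k ∈ Finset.Icc (lo p) (rch p), D k

inductive Valid (α : ℝ) (D : ℤ → ℝ) (a : ℤ) : List (ℤ × ℤ) → Prop
  | single (p : ℤ × ℤ) : massOK α D p → lo p ≤ a → a < rch p → Valid α D a [p]
  | cons (p q : ℤ × ℤ) (rest : List (ℤ × ℤ)) :
      Valid α D a (q :: rest) → massOK α D p →
      rch q < rch p → lo p ≤ rch q + 1 → a < lo p →
      (∀ r, rest.head? = some r → rch r < lo p) →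
      Valid α D a (p :: q :: rest)

variable {α : ℝ} {D : ℤ → ℝ} {a : ℤ} {C : List (ℤ × ℤ)}

lemma lo_le_rch {p : ℤ × ℤ} (hp : massOK α D p) : lo p ≤ rch p := by
  have := hp.1; simp only [lo, rch]; omega

lemma reaches (h : Valid α D a C) : a < Mx a C := by
  cases h with
  | single p hp hpa hpr => simpa [Mx] using hpr
  | cons p q rest hv hp hr hadj hlo halt =>
      have h1 := lo_le_rch hp
      simp only [Mx]; omega

lemma lx_le_a (C : List (ℤ × ℤ)) : Lx a C ≤ a := by
  induction C with
  | nil => simp [Lx]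
  | cons p r ih => exact le_trans (min_le_right _ _) ih

lemma lx_le_mx (h : Valid α D a C) : Lx a C ≤ Mx a C := by
  cases h with
  | single p hp hpa hpr =>
      exact le_trans (min_le_left _ _) (lo_le_rch hp)
  | cons p q rest hv hp hr hadj hlo halt =>
      exact le_trans (min_le_left _ _) (lo_le_rch hp)

lemma mx_tail (h : Valid α D a C) : Mx a C.tail < Mx a C := by
  cases h with
  | single p hp hpa hpr => simp only [List.tail, Mx]; omega
  | cons p q rest hv hp hr hadj hlo halt => simpa [Mx] using hr

lemma ssum_pos (h : Valid α D a C) : 1 ≤ ssum C := by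
  induction h with
  | single p hp hpa hpr => have := hp.1; simp [ssum]; omega
  | cons p q rest hv hp hr hadj hlo halt ih => have := hp.1; simp [ssum] at ih ⊢; omega

lemma len (h : Valid α D a C) : Mx a C - Lx a C + 1 ≤ 3 * ssum C := by
  induction h with
  | single p hp hpa hpr =>
      have h2 := hp.1
      have hmin : Lx a [p] = lo p := by
        simp only [Lx]; exact min_eq_left hpa
      rw [hmin]
      simp only [Mx, ssum, lo, rch]; omega
  | cons p q rest hv hp hr hadj hlo halt ih =>
      have h2 := hp.1
      have hLM : Lx a (q :: rest) ≤ Mx a (q :: rest) := lx_le_mx hv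
      have hrp : rch p ≤ rch q + 1 + 2 * p.2 := by
        simp only [lo, rch] at hadj ⊢; omega
      have hlp : lo p = rch p - 2 * p.2 := by simp only [lo, rch]; omega
      have hMx : Mx a (q :: rest) = rch q := rfl
      rw [hMx] at hLM
      show rch p - min (lo p) (Lx a (q :: rest)) + 1 ≤ 3 * (p.2 + ssum (q :: rest))
      rcases min_cases (lo p) (Lx a (q :: rest)) with ⟨hm, _⟩ | ⟨hm, _⟩ <;> rw [hm] <;>
        [skip; skip] <;> omega

lemma sab_sum (C : List (ℤ × ℤ)) : (sAB C).1 + (sAB C).2 = ssum C := by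
  induction C with
  | nil => simp [sAB, ssum]
  | cons p r ih => simp [sAB, ssum]; omega

lemma sab_nonneg (h : Valid α D a C) : 0 ≤ (sAB C).1 ∧ 0 ≤ (sAB C).2 := by
  induction h with
  | single p hp hpa hpr => have := hp.1; simp [sAB]; omega
  | cons p q rest hv hp hr hadj hlo halt ih =>
      have h2 := hp.1
      have e1 : (sAB (p :: q :: rest)).1 = (sAB (q :: rest)).2 + p.2 := rfl
      have e2 : (sAB (p :: q :: rest)).2 = (sAB (q :: rest)).1 := rfl
      omega

lemma icc_disj {x y z w : ℤ} (h : y < z) :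
    Disjoint (Finset.Icc x y) (Finset.Icc z w) := by
  rw [Finset.disjoint_left]
  intro t ht ht'
  simp only [Finset.mem_Icc] at ht ht'
  omega

lemma disj (hD : ∀ k, 0 ≤ D k) (h : Valid α D a C) :
    α * ((sAB C).1 : ℝ) ≤ ∑ k ∈ Finset.Icc (Lx a C) (Mx a C), D k ∧
    α * ((sAB C).2 : ℝ) ≤ ∑ k ∈ Finset.Icc (Lx a C) (Mx a C.tail), D k := by
  induction h with
  | single p hp hpa hpr =>
      have hmin : Lx a [p] = lo p := by simp only [Lx]; exact min_eq_left hpa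
      constructor
      · rw [hmin]
        have : (sAB [p]).1 = p.2 := by simp [sAB]
        rw [this]
        exact hp.2
      · have : (sAB [p]).2 = 0 := by simp [sAB]
        rw [this]
        simpa using Finset.sum_nonneg (fun i _ => hD i)
  | cons p q rest hv hp hr hadj hlo halt ih =>
      obtain ⟨ih1, ih2⟩ := ih
      have hLx : Lx a (p :: q :: rest) ≤ Lx a (q :: rest) := min_le_right _ _
      have hLlo : Lx a (p :: q :: rest) ≤ lo p := min_le_left _ _
      have hMxc : Mx a (p :: q :: rest) = rch p := rfl
      have hMxq : Mx a (q :: rest) = rch q := rfl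
      constructor
      · -- family with new interval p : mass p + old B-family (over Icc (Lx (q::rest)) (Mx rest))
        have hdisjoint : Disjoint (Finset.Icc (Lx a (q :: rest)) (Mx a rest))
            (Finset.Icc (lo p) (rch p)) := by
          apply icc_disj
          cases rest with
          | nil => simp only [Mx]; omega
          | cons r rest' => exact halt r rfl
        have hsub : Finset.Icc (Lx a (q :: rest)) (Mx a rest) ∪ Finset.Icc (lo p) (rch p)
            ⊆ Finset.Icc (Lx a (p :: q :: rest)) (rch p) := by
          intro t ht
          simp only [Finset.mem_union, Finset.mem_Icc] at ht ⊢
          have hmr : Mx a rest < rch p := by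
            cases rest with
            | nil =>
                have h1 := lo_le_rch hp
                simp only [Mx] at *; omega
            | cons r rest' =>
                have := halt r rfl
                have h1 := lo_le_rch hp
                simp only [Mx] at *; omega
          rcases ht with ht | ht
          · exact ⟨le_trans hLx ht.1, by omega⟩
          · exact ⟨le_trans hLlo ht.1, ht.2⟩
        have hs : (sAB (p :: q :: rest)).1 = (sAB (q :: rest)).2 + p.2 := rfl
        rw [hMxc, hs]
        push_cast
        rw [mul_add]
        calc α * ((sAB (q :: rest)).2 : ℝ) + α * (p.2 : ℝ)
            ≤ (∑ k ∈ Finset.Icc (Lx a (q :: rest)) (Mx a rest), D k)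
              + ∑ k ∈ Finset.Icc (lo p) (rch p), D k := by
              have := hp.2
              have h2 : Mx a (q :: rest).tail = Mx a rest := by cases rest <;> rfl
              rw [h2] at ih2
              linarith [ih2, hp.2]
          _ = ∑ k ∈ (Finset.Icc (Lx a (q :: rest)) (Mx a rest) ∪ Finset.Icc (lo p) (rch p)), D k := by
              rw [Finset.sum_union hdisjoint]
          _ ≤ ∑ k ∈ Finset.Icc (Lx a (p :: q :: rest)) (rch p), D k := by
              exact Finset.sum_le_sum_of_subset_of_nonneg hsub (fun i _ _ => hD i)
      · -- B family of new = A family of old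
        have hs : (sAB (p :: q :: rest)).2 = (sAB (q :: rest)).1 := rfl
        have ht : (p :: q :: rest).tail = q :: rest := rfl
        rw [hs, ht]
        refine le_trans ih1 ?_
        apply Finset.sum_le_sum_of_subset_of_nonneg ?_ (fun i _ _ => hD i)
        exact Finset.Icc_subset_Icc hLx le_rfl

lemma attach : ∀ (C : List (ℤ × ℤ)), Valid α D a C → ∀ p : ℤ × ℤ, massOK α D p →
    lo p ≤ Mx a C + 1 → Mx a C < rch p →
    ∃ C', Valid α D a C' ∧ Mx a C' = rch p := by
  intro C h
  induction h with
  | single q hq hqa hqr =>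
      intro p hp hadj hrch
      by_cases hpa : lo p ≤ a
      · exact ⟨[p], Valid.single p hp hpa (lt_trans hqr hrch), rfl⟩
      · push_neg at hpa
        refine ⟨[p, q], Valid.cons p q [] (Valid.single q hq hqa hqr) hp hrch hadj hpa ?_, rfl⟩
        intro r hr; simp at hr
  | cons p' q' rest hv hp' hr' hadj' hlo' halt' ih =>
      intro p hp hadj hrch
      by_cases hc : lo p ≤ rch q'
      · exact ih p hp (by simpa [Mx] using by omega) (lt_trans hr' hrch)
      · push_neg at hc
        have haq : a < rch q' := by
          have := reaches hv; simpa [Mx] using this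
        refine ⟨p :: p' :: q' :: rest,
          Valid.cons p p' (q' :: rest) (Valid.cons p' q' rest hv hp' hr' hadj' hlo' halt')
            hp hrch hadj (lt_trans haq hc) ?_, rfl⟩
        intro r hr
        simp only [List.head?] at hr
        cases hr
        exact hc

lemma grow (b : ℤ) (claimed : ℤ → Prop)
    (hcl : ∀ i : ℤ, claimed i → ∃ m : ℕ, 1 ≤ m ∧
      α * m ≤ ∑ k ∈ Finset.Icc (i - (m : ℤ)) (i + (m : ℤ)), D k)
    (hclu : ∀ j ∈ Finset.Icc a b, claimed j) :
    ∀ (k : ℕ) (C : List (ℤ × ℤ)), Valid α D a C → b ≤ Mx a C + k →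
      ∃ C', Valid α D a C' ∧ b ≤ Mx a C' := by
  intro k
  induction k with
  | zero =>
      intro C h hk
      exact ⟨C, h, by simpa using hk⟩
  | succ k ih =>
      intro C h hk
      by_cases hb : b ≤ Mx a C
      · exact ⟨C, h, hb⟩
      · push_neg at hb
        have har := reaches h
        have hc : claimed (Mx a C + 1) :=
          hclu _ (Finset.mem_Icc.mpr ⟨by omega, by omega⟩)
        obtain ⟨μ, hμ1, hμ2⟩ := hcl _ hc
        have hμ1' : (1 : ℤ) ≤ (μ : ℤ) := by exact_mod_cast hμ1
        have hmass : massOK α D (Mx a C + 1, (μ : ℤ)) := by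
          constructor
          · exact hμ1'
          · show α * (((μ : ℤ) : ℝ)) ≤ _
            have : (((μ : ℤ) : ℝ)) = ((μ : ℕ) : ℝ) := by push_cast; ring
            rw [this]
            simpa [lo, rch] using hμ2
        obtain ⟨C', hC', hM⟩ := attach C h (Mx a C + 1, (μ : ℤ)) hmass
          (by simp only [lo]; omega) (by simp only [rch]; omega)
        apply ih C' hC'
        rw [hM]
        simp only [rch]
        omega

end Stmt9Aux

/-- If the α-claimed cluster of the origin has size at least n, then there is an
m ≥ n with Σ_{k=−m}^{m} D_k ≥ αm/6. -/
theorem stmt9 (α : ℝ) (hα : 0 < α) (d : ℕ) (hd : 1 ≤ d)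
    (D : ℤ → ℝ) (hD : ∀ k, 0 ≤ D k)
    (claimed : ℤ → Prop)
    (hcl : ∀ i : ℤ, claimed i ↔
      ∃ m : ℕ, 1 ≤ m ∧ α * m ≤ ∑ k ∈ Finset.Icc (i - (m : ℤ)) (i + (m : ℤ)), D k)
    (n : ℕ) (a b : ℤ) (ha : a ≤ 0) (hb : 0 ≤ b)
    (hclu : ∀ j ∈ Finset.Icc a b, claimed j)
    (hsize : (n : ℤ) ≤ b - a + 1) :
    ∃ m : ℕ, n ≤ m ∧ α * m / 6 ≤ ∑ k ∈ Finset.Icc (-(m : ℤ)) (m : ℤ), D k := by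
  classical
  have hab : a ≤ b := le_trans ha hb
  have hcla : claimed a := hclu a (Finset.mem_Icc.mpr ⟨le_refl a, hab⟩)
  obtain ⟨μ₀, hμ₀1, hμ₀2⟩ := (hcl a).1 hcla
  have hμ₀1' : (1 : ℤ) ≤ (μ₀ : ℤ) := by exact_mod_cast hμ₀1
  have hmass0 : Stmt9Aux.massOK α D (a, (μ₀ : ℤ)) := by
    constructor
    · exact hμ₀1'
    · show α * (((μ₀ : ℤ) : ℝ)) ≤ _
      have : (((μ₀ : ℤ) : ℝ)) = ((μ₀ : ℕ) : ℝ) := by push_cast; ring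
      rw [this]
      simpa [Stmt9Aux.lo, Stmt9Aux.rch] using hμ₀2
  have h0 : Stmt9Aux.Valid α D a [(a, (μ₀ : ℤ))] :=
    Stmt9Aux.Valid.single _ hmass0 (by simp only [Stmt9Aux.lo]; omega)
      (by simp only [Stmt9Aux.rch]; omega)
  obtain ⟨C, hC, hbM⟩ := Stmt9Aux.grow b claimed (fun i hi => (hcl i).1 hi) hclu
    ((b - a).toNat) _ h0 (by
      have : ((b - a).toNat : ℤ) = b - a := Int.toNat_of_nonneg (by omega)
      simp only [Stmt9Aux.Mx, Stmt9Aux.rch]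
      omega)
  set M := Stmt9Aux.Mx a C with hM
  set L := Stmt9Aux.Lx a C with hL
  have hLa : L ≤ a := Stmt9Aux.lx_le_a C
  have hlen := Stmt9Aux.len hC
  obtain ⟨h1, h2⟩ := Stmt9Aux.disj hD hC
  have hsab := Stmt9Aux.sab_sum C
  obtain ⟨hs1, hs2⟩ := Stmt9Aux.sab_nonneg hC
  set ℓ : ℤ := M - L + 1 with hℓ
  have hℓn : (n : ℤ) ≤ ℓ := by omega
  have hℓpos : 0 < ℓ := by omega
  have htoNat : ((ℓ.toNat : ℕ) : ℤ) = ℓ := Int.toNat_of_nonneg hℓpos.le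
  refine ⟨ℓ.toNat, ?_, ?_⟩
  · exact_mod_cast htoNat ▸ hℓn
  · -- main estimate
    have htail : Stmt9Aux.Mx a C.tail ≤ M := (Stmt9Aux.mx_tail hC).le
    have h2' : α * ((Stmt9Aux.sAB C).2 : ℝ) ≤ ∑ k ∈ Finset.Icc L M, D k :=
      le_trans h2 (Finset.sum_le_sum_of_subset_of_nonneg
        (Finset.Icc_subset_Icc le_rfl htail) (fun i _ _ => hD i))
    have hsub : Finset.Icc L M ⊆ Finset.Icc (-(ℓ.toNat : ℤ)) (ℓ.toNat : ℤ) := by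
      intro x hx
      simp only [Finset.mem_Icc] at hx ⊢
      omega
    have hmono : ∑ k ∈ Finset.Icc L M, D k ≤ ∑ k ∈ Finset.Icc (-(ℓ.toNat : ℤ)) (ℓ.toNat : ℤ), D k :=
      Finset.sum_le_sum_of_subset_of_nonneg hsub (fun i _ _ => hD i)
    set s1 := (Stmt9Aux.sAB C).1
    set s2 := (Stmt9Aux.sAB C).2
    set T := ∑ k ∈ Finset.Icc (-(ℓ.toNat : ℤ)) (ℓ.toNat : ℤ), D k
    have key : α * (ℓ : ℝ) ≤ 6 * T := by
      rcases le_total s1 s2 with hcmp | hcmp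
      · have hℓ6 : ℓ ≤ 6 * s2 := by omega
        have : α * (ℓ : ℝ) ≤ α * ((6 * s2 : ℤ) : ℝ) := by
          apply mul_le_mul_of_nonneg_left _ hα.le
          exact_mod_cast hℓ6
        calc α * (ℓ : ℝ) ≤ α * ((6 * s2 : ℤ) : ℝ) := this
          _ = 6 * (α * (s2 : ℝ)) := by push_cast; ring
          _ ≤ 6 * T := by nlinarith [le_trans h2' hmono]
      · have hℓ6 : ℓ ≤ 6 * s1 := by omega
        have : α * (ℓ : ℝ) ≤ α * ((6 * s1 : ℤ) : ℝ) := by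
          apply mul_le_mul_of_nonneg_left _ hα.le
          exact_mod_cast hℓ6
        calc α * (ℓ : ℝ) ≤ α * ((6 * s1 : ℤ) : ℝ) := this
          _ = 6 * (α * (s1 : ℝ)) := by push_cast; ring
          _ ≤ 6 * T := by nlinarith [le_trans h1 hmono]
    have hcast : ((ℓ.toNat : ℕ) : ℝ) = ((ℓ : ℤ) : ℝ) := by
      exact_mod_cast congrArg (fun z : ℤ => (z : ℝ)) htoNat
    rw [hcast]
    linarith
end

section
/- Let (D_i)_{i∈ℤ} be a configuration of non-negative integers with D_0 = D, and let (D̂_i) agree with (D_i) except possibly at 0. Fix d ≥ 1 and set D_i^d = max{D_i − d, 0}. Suppose a vertex i with |i| ≥ 2D is 1-claimed in the configuration (D_i) (i.e., Σ_{k=i−m}^{i+m} D_k^d ≥ m for some m ≥ 1). Then i is (1/2)-claimed in the configuration (D̂_i) (i.e., Σ_{k=i−m}^{i+m} D̂_k^d ≥ m/2 for some m ≥ 1). -/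
/-- Coupling lemma: if a vertex i with |i| ≥ 2D is 1-claimed in the original
configuration, it is (1/2)-claimed in the configuration modified at the origin. -/
theorem stmt13 (d : ℕ) (hd : 1 ≤ d) (D : ℤ → ℕ) (Dhat : ℤ → ℕ)
    (hagree : ∀ k : ℤ, k ≠ 0 → Dhat k = D k)
    (i : ℤ) (hi : 2 * (D 0 : ℤ) ≤ |i|)
    (hclaimed : ∃ m : ℕ, 1 ≤ m ∧
      m ≤ ∑ k ∈ Finset.Icc (i - (m : ℤ)) (i + (m : ℤ)), (D k - d)) :
    ∃ m : ℕ, 1 ≤ m ∧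
      m ≤ 2 * ∑ k ∈ Finset.Icc (i - (m : ℤ)) (i + (m : ℤ)), (Dhat k - d) := by
  obtain ⟨m, hm1, hm⟩ := hclaimed
  refine ⟨m, hm1, ?_⟩
  set s : Finset ℤ := Finset.Icc (i - (m : ℤ)) (i + (m : ℤ)) with hs
  by_cases h0 : (0 : ℤ) ∈ s
  · -- 0 is in the interval, so |i| ≤ m, hence 2 * D 0 ≤ m
    have hmem : i - (m : ℤ) ≤ 0 ∧ (0 : ℤ) ≤ i + (m : ℤ) := by
      simpa [hs, Finset.mem_Icc] using h0
    have habs : |i| ≤ (m : ℤ) := by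
      rw [abs_le]; omega
    have hDm : 2 * D 0 ≤ m := by
      have : 2 * (D 0 : ℤ) ≤ (m : ℤ) := le_trans hi habs
      exact_mod_cast this
    have hsplit : ∑ k ∈ s.erase 0, (D k - d) + (D 0 - d) = ∑ k ∈ s, (D k - d) :=
      Finset.sum_erase_add s _ h0
    have heq : ∑ k ∈ s.erase 0, (D k - d) = ∑ k ∈ s.erase 0, (Dhat k - d) := by
      refine Finset.sum_congr rfl fun k hk => ?_
      rw [hagree k (Finset.ne_of_mem_erase hk)]
    have hsub : ∑ k ∈ s.erase 0, (Dhat k - d) ≤ ∑ k ∈ s, (Dhat k - d) :=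
      Finset.sum_le_sum_of_subset (Finset.erase_subset _ _)
    have h1 : ∑ k ∈ s, (D k - d) ≤ ∑ k ∈ s, (Dhat k - d) + D 0 := by
      have : D 0 - d ≤ D 0 := Nat.sub_le _ _
      omega
    omega
  · have heq : ∑ k ∈ s, (D k - d) = ∑ k ∈ s, (Dhat k - d) := by
      refine Finset.sum_congr rfl fun k hk => ?_
      rw [hagree k (by rintro rfl; exact h0 hk)]
    omega
end

section
/- Let (X_i^j)_{i∈ℤ} be the stationary {0,1}-valued process X_i^j = 1_{D'_i ≥ j}, where (D'_i) is a stationary sequence of non-negative integers bounded by u, with p_j^+ := P(D'_0 ≥ j) > 0 and infinitely many 1's almost surely for each 1 ≤ j ≤ u. If K_j denotes the distance from 0 to the (2j−1)-th index i > 0 with X_i^j = 1 (set K_j = 0 when D'_0 < j), then E[K_j | D'_0 ≥ j] = (2j−1)/p_j^+, and hence the total T = Σ_{j=1}^u K_j satisfies E[T] ≤ u² < ∞. -/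
open MeasureTheory ENNReal

section CT
variable {Ω : Type*} [MeasurableSpace Ω] (D' : ℤ → Ω → ℕ) (j : ℕ)

/-- forward count of ones in [1,n] -/
def ctc (n : ℕ) (ω : Ω) : ℕ := ((Finset.Icc 1 n).filter fun k : ℕ => j ≤ D' ((k : ℤ)) ω).card

/-- backward count in the integer window [a,0] -/
noncomputable def ctV (a : ℤ) (ω : Ω) : ℕ := ((Finset.Icc a 0).filter fun i : ℤ => j ≤ D' i ω).card

/-- backward count matching the stationarity transported event: ones among {k-n : k ∈ [1,n]} = [1-n,0] -/
def ctd (n : ℕ) (ω : Ω) : ℕ := ((Finset.Icc 1 n).filter fun k : ℕ => j ≤ D' ((k : ℤ) - n) ω).card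

/-- first return-type variable -/
noncomputable def ctN (m : ℕ) (ω : Ω) : ℕ := sInf {i : ℕ | 0 < i ∧ ctc D' j i ω = m}

lemma ctd_eq_V (n : ℕ) (ω : Ω) : ctd D' j n ω = ctV D' j (1 - n) ω := by
  unfold ctd ctV
  refine Finset.card_bij (fun (k:ℕ) _ => (k : ℤ) - (n:ℤ)) ?_ ?_ ?_
  · intro a ha
    simp only [Finset.mem_filter, Finset.mem_Icc] at ha ⊢
    omega
  · intro a ha b hb h
    simp only [Finset.mem_filter, Finset.mem_Icc] at ha hb
    omega
  · intro b hb
    simp only [Finset.mem_filter, Finset.mem_Icc] at hb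
    refine ⟨(b + n).toNat, ?_, ?_⟩
    · simp only [Finset.mem_filter, Finset.mem_Icc]
      constructor
      · omega
      · have : ((b + n).toNat : ℤ) - n = b := by omega
        rw [this]; exact hb.2
    · omega

lemma ctV_step (a : ℤ) (ha : a ≤ 0) (ω : Ω) :
    ctV D' j (a - 1) ω = ctV D' j a ω + (if j ≤ D' (a - 1) ω then 1 else 0) := by
  unfold ctV
  have h : Finset.Icc (a - 1) 0 = insert (a - 1) (Finset.Icc a 0) := by
    ext x; simp only [Finset.mem_insert, Finset.mem_Icc]; omega
  rw [h, Finset.filter_insert]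
  split
  · rw [Finset.card_insert_of_notMem]
    simp only [Finset.mem_filter, Finset.mem_Icc]; omega
  · simp

lemma ctV_neg_eq (n : ℕ) (ω : Ω) :
    ctV D' j (-(n : ℤ)) ω = ctd D' j n ω + (if j ≤ D' (-(n : ℤ)) ω then 1 else 0) := by
  rcases Nat.eq_zero_or_pos n with hn | hn
  · subst hn
    simp only [ctd, ctV, Nat.cast_zero, neg_zero, Finset.Icc_self, Finset.filter_singleton]
    split <;> simp
  · rw [ctd_eq_V]
    have h : (-(n:ℤ)) = (1 - (n:ℤ)) - 1 := by ring
    rw [h, ctV_step D' j (1 - (n:ℤ)) (by omega)]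

lemma ctc_step (n : ℕ) (ω : Ω) :
    ctc D' j (n + 1) ω = ctc D' j n ω + (if j ≤ D' ((n : ℤ) + 1) ω then 1 else 0) := by
  unfold ctc
  have h : Finset.Icc 1 (n + 1) = insert (n + 1) (Finset.Icc 1 n) := by
    ext x; simp only [Finset.mem_insert, Finset.mem_Icc]; omega
  rw [h, Finset.filter_insert]
  have hc : ((n : ℤ) + 1) = ((n + 1 : ℕ) : ℤ) := by push_cast; ring
  rw [hc]
  split
  · rw [Finset.card_insert_of_notMem]
    simp only [Finset.mem_filter, Finset.mem_Icc]; omega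
  · simp

lemma ctc_zero (ω : Ω) : ctc D' j 0 ω = 0 := by simp [ctc]

lemma ctc_mono (ω : Ω) : Monotone (fun n => ctc D' j n ω) := by
  intro a b hab
  unfold ctc
  exact Finset.card_le_card (Finset.filter_subset_filter _ (Finset.Icc_subset_Icc_right hab))

end CT

section CT2
variable {Ω : Type*} [MeasurableSpace Ω] (ℙ : Measure Ω) [IsProbabilityMeasure ℙ]
  (D' : ℤ → Ω → ℕ) (j : ℕ)

lemma meas_setX (hmeas : ∀ i, Measurable (D' i)) (i : ℤ) :
    MeasurableSet {ω | j ≤ D' i ω} := by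
  have : {ω | j ≤ D' i ω} = (D' i) ⁻¹' (Set.Ici j) := rfl
  rw [this]; exact (hmeas i) measurableSet_Ici

lemma meas_card (hmeas : ∀ i, Measurable (D' i)) (s : Finset ℕ) (t : ℕ → ℤ) :
    Measurable (fun ω => (s.filter fun k : ℕ => j ≤ D' (t k) ω).card) := by
  simp_rw [Finset.card_filter]
  exact Finset.measurable_sum _ (fun k _ =>
    Measurable.ite (meas_setX D' j hmeas (t k)) measurable_const measurable_const)

lemma shift_event (hmeas : ∀ i, Measurable (D' i))
    (hstat : ∀ n : ℤ,
      Measure.map (fun ω => fun i => D' (i + n) ω) ℙ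
        = Measure.map (fun ω => fun i => D' i ω) ℙ)
    (S : Set (ℤ → ℕ)) (hS : MeasurableSet S) (n : ℤ) :
    ℙ {ω | (fun i => D' (i + n) ω) ∈ S} = ℙ {ω | (fun i => D' i ω) ∈ S} := by
  have h1 : Measurable (fun ω => fun i : ℤ => D' (i + n) ω) :=
    measurable_pi_lambda _ (fun i => hmeas _)
  have h2 : Measurable (fun ω => fun i : ℤ => D' i ω) :=
    measurable_pi_lambda _ (fun i => hmeas _)
  have e1 : ℙ {ω | (fun i => D' (i + n) ω) ∈ S}
      = Measure.map (fun ω => fun i => D' (i + n) ω) ℙ S := (Measure.map_apply h1 hS).symm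
  have e2 : ℙ {ω | (fun i => D' i ω) ∈ S}
      = Measure.map (fun ω => fun i => D' i ω) ℙ S := (Measure.map_apply h2 hS).symm
  rw [e1, e2, hstat n]

lemma no_min (hmeas : ∀ i, Measurable (D' i))
    (hstat : ∀ n : ℤ,
      Measure.map (fun ω => fun i => D' (i + n) ω) ℙ
        = Measure.map (fun ω => fun i => D' i ω) ℙ)
    (hinfj : ∀ᵐ ω ∂ℙ, {i : ℤ | j ≤ D' i ω}.Infinite) :
    ∀ᵐ ω ∂ℙ, ∀ t : ℤ, ∃ i < t, j ≤ D' i ω := by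
  set B : ℤ → Set Ω := fun k => {ω | j ≤ D' k ω ∧ ∀ i < k, D' i ω < j} with hB
  have hSmeas : MeasurableSet {s : ℤ → ℕ | j ≤ s 0 ∧ ∀ i < (0:ℤ), s i < j} := by
    have he : {s : ℤ → ℕ | j ≤ s 0 ∧ ∀ i < (0:ℤ), s i < j}
        = {s : ℤ → ℕ | j ≤ s 0} ∩ ⋂ i : ℤ, {s | i < 0 → s i < j} := by
      ext s; simp [Set.mem_iInter]
    rw [he]
    refine MeasurableSet.inter (measurable_pi_apply 0 measurableSet_Ici)
      (MeasurableSet.iInter fun i => ?_)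
    by_cases hi : i < 0
    · have : {s : ℤ → ℕ | i < 0 → s i < j} = {s | s i < j} := by ext s; simp [hi]
      rw [this]; exact measurable_pi_apply i measurableSet_Iio
    · have : {s : ℤ → ℕ | i < 0 → s i < j} = Set.univ := by ext s; simp [hi]
      rw [this]; exact MeasurableSet.univ
  have hBmeas : ∀ k, MeasurableSet (B k) := by
    intro k
    have he : B k = {ω | j ≤ D' k ω} ∩ ⋂ i : ℤ, {ω | i < k → D' i ω < j} := by
      ext ω; simp [hB, Set.mem_iInter]
    rw [he]
    refine MeasurableSet.inter (meas_setX D' j hmeas k) (MeasurableSet.iInter fun i => ?_)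
    by_cases hi : i < k
    · have : {ω | i < k → D' i ω < j} = {ω | D' i ω < j} := by ext s; simp [hi]
      rw [this]
      exact (hmeas i) measurableSet_Iio
    · have : {ω | i < k → D' i ω < j} = Set.univ := by ext s; simp [hi]
      rw [this]; exact MeasurableSet.univ
  have hBconst : ∀ k, ℙ (B k) = ℙ (B 0) := by
    intro k
    have h := shift_event ℙ D' hmeas hstat _ hSmeas k
    have e1 : {ω | (fun i => D' (i + k) ω) ∈ {s : ℤ → ℕ | j ≤ s 0 ∧ ∀ i < (0:ℤ), s i < j}}
        = B k := by
      ext ω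
      simp only [Set.mem_setOf_eq, hB, zero_add]
      constructor
      · rintro ⟨h1, h2⟩
        refine ⟨h1, fun i hi => ?_⟩
        have := h2 (i - k) (by omega)
        simpa using this
      · rintro ⟨h1, h2⟩
        exact ⟨h1, fun i hi => h2 (i + k) (by omega)⟩
    have e2 : {ω | (fun i : ℤ => D' i ω) ∈ {s : ℤ → ℕ | j ≤ s 0 ∧ ∀ i < (0:ℤ), s i < j}}
        = B 0 := rfl
    rw [e1, e2] at h
    exact h
  have hdisj : Pairwise (Function.onFun Disjoint B) := by
    intro k k' hkk'
    rcases lt_or_gt_of_ne hkk' with h | h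
    · apply Set.disjoint_left.2
      rintro ω ⟨h1, _⟩ ⟨_, h4⟩
      exact absurd h1 (not_le.2 (h4 k h))
    · apply Set.disjoint_left.2
      rintro ω ⟨h1, h2⟩ ⟨h3, _⟩
      exact absurd h3 (not_le.2 (h2 k' h))
  have hB0 : ℙ (B 0) = 0 := by
    by_contra h0
    have := measure_iUnion (μ := ℙ) hdisj hBmeas
    have htop : ∑' k : ℤ, ℙ (B k) = ∞ := by
      have : ∀ k : ℤ, ℙ (B k) = ℙ (B 0) := hBconst
      rw [tsum_congr this]
      exact ENNReal.tsum_const_eq_top_of_ne_zero h0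
    rw [htop] at this
    have hle : ℙ (⋃ k, B k) ≤ 1 := prob_le_one
    rw [this] at hle
    simp at hle
  have hallB : ∀ᵐ ω ∂ℙ, ∀ k : ℤ, ω ∉ B k := by
    rw [MeasureTheory.ae_iff]
    have : {ω | ¬∀ (k : ℤ), ω ∉ B k} = ⋃ k, B k := by
      ext ω; simp
    rw [this]
    exact measure_iUnion_null (fun k => by rw [hBconst k]; exact hB0)
  filter_upwards [hallB, hinfj] with ω hω hinfω
  intro t
  by_contra hno
  push_neg at hno
  have hne : {i : ℤ | j ≤ D' i ω}.Nonempty := hinfω.nonempty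
  have hbdd : ∃ b : ℤ, ∀ z : ℤ, j ≤ D' z ω → b ≤ z := ⟨t, fun z hz => by
    by_contra h; push_neg at h; exact absurd hz (not_le.2 (hno z h))⟩
  obtain ⟨lb, hlb1, hlb2⟩ := Int.exists_least_of_bdd hbdd ⟨hne.choose, hne.choose_spec⟩
  exact hω lb ⟨hlb1, fun i hi => by
    by_contra h; push_neg at h; exact absurd (hlb2 i h) (not_le.2 hi)⟩

lemma no_max (hmeas : ∀ i, Measurable (D' i))
    (hstat : ∀ n : ℤ,
      Measure.map (fun ω => fun i => D' (i + n) ω) ℙ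
        = Measure.map (fun ω => fun i => D' i ω) ℙ)
    (hinfj : ∀ᵐ ω ∂ℙ, {i : ℤ | j ≤ D' i ω}.Infinite) :
    ∀ᵐ ω ∂ℙ, ∀ t : ℤ, ∃ i > t, j ≤ D' i ω := by
  set B : ℤ → Set Ω := fun k => {ω | j ≤ D' k ω ∧ ∀ i > k, D' i ω < j} with hB
  have hSmeas : MeasurableSet {s : ℤ → ℕ | j ≤ s 0 ∧ ∀ i > (0:ℤ), s i < j} := by
    have he : {s : ℤ → ℕ | j ≤ s 0 ∧ ∀ i > (0:ℤ), s i < j}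
        = {s : ℤ → ℕ | j ≤ s 0} ∩ ⋂ i : ℤ, {s | i > 0 → s i < j} := by
      ext s; simp [Set.mem_iInter]
    rw [he]
    refine MeasurableSet.inter (measurable_pi_apply 0 measurableSet_Ici)
      (MeasurableSet.iInter fun i => ?_)
    by_cases hi : i > 0
    · have : {s : ℤ → ℕ | i > 0 → s i < j} = {s | s i < j} := by ext s; simp [hi]
      rw [this]; exact measurable_pi_apply i measurableSet_Iio
    · have : {s : ℤ → ℕ | i > 0 → s i < j} = Set.univ := by ext s; simp [hi]
      rw [this]; exact MeasurableSet.univ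
  have hBmeas : ∀ k, MeasurableSet (B k) := by
    intro k
    have he : B k = {ω | j ≤ D' k ω} ∩ ⋂ i : ℤ, {ω | i > k → D' i ω < j} := by
      ext ω; simp [hB, Set.mem_iInter]
    rw [he]
    refine MeasurableSet.inter (meas_setX D' j hmeas k) (MeasurableSet.iInter fun i => ?_)
    by_cases hi : i > k
    · have : {ω | i > k → D' i ω < j} = {ω | D' i ω < j} := by ext s; simp [hi]
      rw [this]
      exact (hmeas i) measurableSet_Iio
    · have : {ω | i > k → D' i ω < j} = Set.univ := by ext s; simp [hi]
      rw [this]; exact MeasurableSet.univ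
  have hBconst : ∀ k, ℙ (B k) = ℙ (B 0) := by
    intro k
    have h := shift_event ℙ D' hmeas hstat _ hSmeas k
    have e1 : {ω | (fun i => D' (i + k) ω) ∈ {s : ℤ → ℕ | j ≤ s 0 ∧ ∀ i > (0:ℤ), s i < j}}
        = B k := by
      ext ω
      simp only [Set.mem_setOf_eq, hB, zero_add]
      constructor
      · rintro ⟨h1, h2⟩
        refine ⟨h1, fun i hi => ?_⟩
        have := h2 (i - k) (by omega)
        simpa using this
      · rintro ⟨h1, h2⟩
        exact ⟨h1, fun i hi => h2 (i + k) (by omega)⟩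
    have e2 : {ω | (fun i : ℤ => D' i ω) ∈ {s : ℤ → ℕ | j ≤ s 0 ∧ ∀ i > (0:ℤ), s i < j}}
        = B 0 := rfl
    rw [e1, e2] at h
    exact h
  have hdisj : Pairwise (Function.onFun Disjoint B) := by
    intro k k' hkk'
    rcases lt_or_gt_of_ne hkk' with h | h
    · apply Set.disjoint_left.2
      rintro ω ⟨h1, h2⟩ ⟨h3, _⟩
      exact absurd h3 (not_le.2 (h2 k' h))
    · apply Set.disjoint_left.2
      rintro ω ⟨h1, _⟩ ⟨_, h4⟩
      exact absurd h1 (not_le.2 (h4 k h))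
  have hB0 : ℙ (B 0) = 0 := by
    by_contra h0
    have := measure_iUnion (μ := ℙ) hdisj hBmeas
    have htop : ∑' k : ℤ, ℙ (B k) = ∞ := by
      have : ∀ k : ℤ, ℙ (B k) = ℙ (B 0) := hBconst
      rw [tsum_congr this]
      exact ENNReal.tsum_const_eq_top_of_ne_zero h0
    rw [htop] at this
    have hle : ℙ (⋃ k, B k) ≤ 1 := prob_le_one
    rw [this] at hle
    simp at hle
  have hallB : ∀ᵐ ω ∂ℙ, ∀ k : ℤ, ω ∉ B k := by
    rw [MeasureTheory.ae_iff]
    have : {ω | ¬∀ (k : ℤ), ω ∉ B k} = ⋃ k, B k := by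
      ext ω; simp
    rw [this]
    exact measure_iUnion_null (fun k => by rw [hBconst k]; exact hB0)
  filter_upwards [hallB, hinfj] with ω hω hinfω
  intro t
  by_contra hno
  push_neg at hno
  have hne : {i : ℤ | j ≤ D' i ω}.Nonempty := hinfω.nonempty
  have hbdd : ∃ b : ℤ, ∀ z : ℤ, j ≤ D' z ω → z ≤ b := ⟨t, fun z hz => by
    by_contra h; push_neg at h; exact absurd hz (not_le.2 (hno z h))⟩
  obtain ⟨lb, hlb1, hlb2⟩ := Int.exists_greatest_of_bdd hbdd ⟨hne.choose, hne.choose_spec⟩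
  exact hω lb ⟨hlb1, fun i hi => by
    by_contra h; push_neg at h; exact absurd (hlb2 i h) (not_le.2 hi)⟩

end CT2

section CT3
variable {Ω : Type*} [MeasurableSpace Ω] (D' : ℤ → Ω → ℕ) (j : ℕ)

lemma hit_lemma (f : ℕ → ℕ) (hstep : ∀ n, f (n + 1) ≤ f n + 1) (m : ℕ)
    (h0 : f 0 ≤ m) (hex : ∃ n, m ≤ f n) : ∃ n, f n = m ∧ ∀ l < n, f l < m := by
  classical
  have hfn0 : m ≤ f (Nat.find hex) := Nat.find_spec hex
  have hmin : ∀ l < Nat.find hex, f l < m := fun l hl => by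
    have := Nat.find_min hex hl; omega
  refine ⟨Nat.find hex, ?_, hmin⟩
  rcases Nat.eq_zero_or_pos (Nat.find hex) with h | h
  · rw [h] at hfn0 ⊢; omega
  · have h1 := hmin _ (Nat.sub_lt h one_pos)
    have h2 := hstep (Nat.find hex - 1)
    have h3 : Nat.find hex - 1 + 1 = Nat.find hex := by omega
    rw [h3] at h2
    omega

lemma ctc_unbdd (ω : Ω) (hup : ∀ t : ℤ, ∃ i > t, j ≤ D' i ω) :
    ∀ q, ∃ n, q ≤ ctc D' j n ω := by
  intro q
  induction q with
  | zero => exact ⟨0, Nat.zero_le _⟩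
  | succ q ih =>
      obtain ⟨n, hn⟩ := ih
      obtain ⟨i, hi, hX⟩ := hup (n : ℤ)
      refine ⟨i.toNat, ?_⟩
      have hin : (i.toNat : ℤ) = i := by omega
      have hsub : insert i.toNat ((Finset.Icc 1 n).filter fun k : ℕ => j ≤ D' ((k:ℤ)) ω)
          ⊆ (Finset.Icc 1 i.toNat).filter fun k : ℕ => j ≤ D' ((k:ℤ)) ω := by
        intro x hx
        rcases Finset.mem_insert.1 hx with h | h
        · subst h
          simp only [Finset.mem_filter, Finset.mem_Icc, hin]
          exact ⟨⟨by omega, le_refl _⟩, hX⟩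
        · simp only [Finset.mem_filter, Finset.mem_Icc] at h ⊢
          exact ⟨⟨h.1.1, by omega⟩, h.2⟩
      have hnotmem : i.toNat ∉ (Finset.Icc 1 n).filter fun k : ℕ => j ≤ D' ((k:ℤ)) ω := by
        simp only [Finset.mem_filter, Finset.mem_Icc]
        omega
      have := Finset.card_le_card hsub
      rw [Finset.card_insert_of_notMem hnotmem] at this
      unfold ctc at hn ⊢
      omega

lemma ctV_unbdd (ω : Ω) (hdown : ∀ t : ℤ, ∃ i < t, j ≤ D' i ω) :
    ∀ q, ∃ n : ℕ, q ≤ ctV D' j (-(n : ℤ)) ω := by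
  intro q
  induction q with
  | zero => exact ⟨0, Nat.zero_le _⟩
  | succ q ih =>
      obtain ⟨n, hn⟩ := ih
      obtain ⟨i, hi, hX⟩ := hdown (-(n : ℤ))
      refine ⟨(-i).toNat, ?_⟩
      have hin : (-((-i).toNat : ℤ)) = i := by omega
      have hsub : insert i ((Finset.Icc (-(n:ℤ)) 0).filter fun x : ℤ => j ≤ D' x ω)
          ⊆ (Finset.Icc (-(((-i).toNat : ℕ) : ℤ)) 0).filter fun x : ℤ => j ≤ D' x ω := by
        intro x hx
        rcases Finset.mem_insert.1 hx with h | h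
        · subst h
          simp only [Finset.mem_filter, Finset.mem_Icc]
          exact ⟨⟨by omega, by omega⟩, hX⟩
        · simp only [Finset.mem_filter, Finset.mem_Icc] at h ⊢
          exact ⟨⟨by omega, h.1.2⟩, h.2⟩
      have hnotmem : i ∉ (Finset.Icc (-(n:ℤ)) 0).filter fun x : ℤ => j ≤ D' x ω := by
        simp only [Finset.mem_filter, Finset.mem_Icc]
        omega
      have := Finset.card_le_card hsub
      rw [Finset.card_insert_of_notMem hnotmem] at this
      unfold ctV at hn ⊢
      omega

lemma ctd_cover (ω : Ω) (hdown : ∀ t : ℤ, ∃ i < t, j ≤ D' i ω) (r : ℕ) :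
    ∃ n : ℕ, j ≤ D' (-(n : ℤ)) ω ∧ ctd D' j n ω = r := by
  have hstep : ∀ n : ℕ, ctV D' j (-((n+1 : ℕ) : ℤ)) ω ≤ ctV D' j (-(n:ℤ)) ω + 1 := by
    intro n
    have h : (-((n+1:ℕ) : ℤ)) = (-(n:ℤ)) - 1 := by push_cast; ring
    rw [h, ctV_step D' j (-(n:ℤ)) (by omega)]
    split <;> omega
  have h0 : ctV D' j (-((0:ℕ):ℤ)) ω ≤ 1 := by
    simp only [Nat.cast_zero, neg_zero, ctV, Finset.Icc_self, Finset.filter_singleton]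
    split <;> simp
  obtain ⟨n, hfn, hmin⟩ := hit_lemma (fun n => ctV D' j (-(n:ℤ)) ω) hstep (r+1)
    (by show ctV D' j (-((0:ℕ):ℤ)) ω ≤ r + 1; omega) (ctV_unbdd D' j ω hdown (r+1))
  have hdec := ctV_neg_eq D' j n ω
  cases n with
  | zero =>
      have hd0 : ctd D' j 0 ω = 0 := by simp [ctd]
      rw [hfn, hd0] at hdec
      refine ⟨0, ?_, ?_⟩
      · by_contra h
        rw [if_neg h] at hdec
        omega
      · rw [hd0]
        split at hdec <;> omega
  | succ k =>
      have hk : ctV D' j (-(k:ℤ)) ω < r + 1 := hmin k (Nat.lt_succ_self k)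
      have hdk : ctd D' j (k+1) ω = ctV D' j (-(k:ℤ)) ω := by
        rw [ctd_eq_V]
        congr 1
        push_cast
        ring
      rw [hfn] at hdec
      refine ⟨k+1, ?_, ?_⟩
      · by_contra h
        rw [if_neg h] at hdec
        omega
      · rw [hdk] at hdec ⊢
        split at hdec <;> omega

lemma ctd_disj (ω : Ω) (r : ℕ) (n n' : ℕ) (h : n < n')
    (h1 : j ≤ D' (-(n:ℤ)) ω) (h2 : ctd D' j n ω = r) (h3 : ctd D' j n' ω = r) : False := by
  rw [ctd_eq_V] at h2 h3
  have hsub : insert (-(n:ℤ)) ((Finset.Icc (1-(n:ℤ)) 0).filter fun x : ℤ => j ≤ D' x ω)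
      ⊆ (Finset.Icc (1-(n':ℤ)) 0).filter fun x : ℤ => j ≤ D' x ω := by
    intro x hx
    rcases Finset.mem_insert.1 hx with hh | hh
    · subst hh
      simp only [Finset.mem_filter, Finset.mem_Icc]
      exact ⟨⟨by omega, by omega⟩, h1⟩
    · simp only [Finset.mem_filter, Finset.mem_Icc] at hh ⊢
      exact ⟨⟨by omega, hh.1.2⟩, hh.2⟩
  have hnotmem : (-(n:ℤ)) ∉ (Finset.Icc (1-(n:ℤ)) 0).filter fun x : ℤ => j ≤ D' x ω := by
    simp only [Finset.mem_filter, Finset.mem_Icc]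
    omega
  have hc := Finset.card_le_card hsub
  rw [Finset.card_insert_of_notMem hnotmem] at hc
  unfold ctV at h2 h3
  omega

lemma ctN_mem (ω : Ω) (m : ℕ) (hm : 1 ≤ m) (hup : ∀ t : ℤ, ∃ i > t, j ≤ D' i ω) :
    0 < ctN D' j m ω ∧ ctc D' j (ctN D' j m ω) ω = m := by
  have hstep : ∀ n, ctc D' j (n+1) ω ≤ ctc D' j n ω + 1 := by
    intro n
    rw [ctc_step]
    split <;> omega
  obtain ⟨n, hfn, hmin⟩ := hit_lemma (fun n => ctc D' j n ω) hstep m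
    (by show ctc D' j 0 ω ≤ m; rw [ctc_zero]; omega) (ctc_unbdd D' j ω hup m)
  have hne : (ctN D' j m ω) ∈ {i : ℕ | 0 < i ∧ ctc D' j i ω = m} := by
    apply Nat.sInf_mem
    refine ⟨n, ?_, hfn⟩
    rcases Nat.eq_zero_or_pos n with h | h
    · subst h; rw [ctc_zero] at hfn; omega
    · exact h
  exact ⟨hne.1, hne.2⟩

lemma ctN_lt_iff (ω : Ω) (m : ℕ) (hm : 1 ≤ m) (hup : ∀ t : ℤ, ∃ i > t, j ≤ D' i ω) (n : ℕ) :
    n < ctN D' j m ω ↔ ctc D' j n ω < m := by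
  obtain ⟨hNpos, hNval⟩ := ctN_mem D' j ω m hm hup
  constructor
  · intro hn
    by_contra h
    push_neg at h
    have hstep : ∀ l, ctc D' j (l+1) ω ≤ ctc D' j l ω + 1 := by
      intro l; rw [ctc_step]; split <;> omega
    obtain ⟨n0, hfn0, hmin0⟩ := hit_lemma (fun l => ctc D' j l ω) hstep m
      (by show ctc D' j 0 ω ≤ m; rw [ctc_zero]; omega) ⟨n, h⟩
    have hn0pos : 0 < n0 := by
      rcases Nat.eq_zero_or_pos n0 with hh | hh
      · subst hh; rw [ctc_zero] at hfn0; omega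
      · exact hh
    have : ctN D' j m ω ≤ n0 := Nat.sInf_le ⟨hn0pos, hfn0⟩
    have hn0n : n0 ≤ n := by
      by_contra hh
      push_neg at hh
      have := hmin0 n hh
      omega
    omega
  · intro h
    by_contra hh
    push_neg at hh
    have := ctc_mono D' j ω hh
    simp only at this
    omega

end CT3
section CT4
variable {Ω : Type*} [MeasurableSpace Ω] (ℙ : Measure Ω) [IsProbabilityMeasure ℙ]
  (D' : ℤ → Ω → ℕ) (j : ℕ)

lemma meas_SS (n r : ℕ) : MeasurableSet
    {s : ℤ → ℕ | j ≤ s 0 ∧ ((Finset.Icc 1 n).filter fun k : ℕ => j ≤ s ((k:ℤ))).card = r} := by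
  have he : {s : ℤ → ℕ | j ≤ s 0 ∧ ((Finset.Icc 1 n).filter fun k : ℕ => j ≤ s ((k:ℤ))).card = r}
      = ((fun s : ℤ → ℕ => s 0) ⁻¹' Set.Ici j) ∩
        ((fun s : ℤ → ℕ => ((Finset.Icc 1 n).filter fun k : ℕ => j ≤ s ((k:ℤ))).card) ⁻¹' {r}) := by
    ext s; simp [Set.mem_setOf_eq]
  rw [he]
  refine MeasurableSet.inter (measurable_pi_apply 0 measurableSet_Ici) ?_
  have hm : Measurable (fun s : ℤ → ℕ =>
      ((Finset.Icc 1 n).filter fun k : ℕ => j ≤ s ((k:ℤ))).card) := by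
    simp_rw [Finset.card_filter]
    exact Finset.measurable_sum _ (fun k _ =>
      Measurable.ite ((measurable_pi_apply ((k:ℤ))) measurableSet_Ici)
        measurable_const measurable_const)
  exact hm (measurableSet_singleton r)

lemma EG_eq (hmeas : ∀ i, Measurable (D' i))
    (hstat : ∀ n : ℤ,
      Measure.map (fun ω => fun i => D' (i + n) ω) ℙ
        = Measure.map (fun ω => fun i => D' i ω) ℙ)
    (n r : ℕ) :
    ℙ {ω | j ≤ D' 0 ω ∧ ctc D' j n ω = r}
      = ℙ {ω | j ≤ D' (-(n:ℤ)) ω ∧ ctd D' j n ω = r} := by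
  have h := shift_event ℙ D' hmeas hstat _ (meas_SS j n r) (-(n:ℤ))
  have e1 : {ω | (fun i => D' (i + -(n:ℤ)) ω) ∈
      {s : ℤ → ℕ | j ≤ s 0 ∧ ((Finset.Icc 1 n).filter fun k : ℕ => j ≤ s ((k:ℤ))).card = r}}
      = {ω | j ≤ D' (-(n:ℤ)) ω ∧ ctd D' j n ω = r} := by
    ext ω
    simp only [Set.mem_setOf_eq, zero_add, ctd]
    have hf : (fun k : ℕ => j ≤ D' ((k:ℤ) + -(n:ℤ)) ω)
        = (fun k : ℕ => j ≤ D' ((k:ℤ) - (n:ℤ)) ω) := by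
      funext k; rw [← sub_eq_add_neg]
    simp only [hf]
  have e2 : {ω | (fun i : ℤ => D' i ω) ∈
      {s : ℤ → ℕ | j ≤ s 0 ∧ ((Finset.Icc 1 n).filter fun k : ℕ => j ≤ s ((k:ℤ))).card = r}}
      = {ω | j ≤ D' 0 ω ∧ ctc D' j n ω = r} := rfl
  rw [e1, e2] at h
  exact h.symm

lemma G_total (hmeas : ∀ i, Measurable (D' i))
    (hstat : ∀ n : ℤ,
      Measure.map (fun ω => fun i => D' (i + n) ω) ℙ
        = Measure.map (fun ω => fun i => D' i ω) ℙ)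
    (hinfj : ∀ᵐ ω ∂ℙ, {i : ℤ | j ≤ D' i ω}.Infinite) (r : ℕ) :
    ∑' n : ℕ, ℙ {ω | j ≤ D' (-(n:ℤ)) ω ∧ ctd D' j n ω = r} = 1 := by
  set G : ℕ → Set Ω := fun n => {ω | j ≤ D' (-(n:ℤ)) ω ∧ ctd D' j n ω = r} with hG
  have hGmeas : ∀ n, MeasurableSet (G n) := by
    intro n
    have : G n = {ω | j ≤ D' (-(n:ℤ)) ω} ∩
        ((fun ω => ctd D' j n ω) ⁻¹' {r}) := by
      ext ω; simp [hG, Set.mem_setOf_eq]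
    rw [this]
    exact (meas_setX D' j hmeas _).inter
      ((meas_card D' j hmeas _ (fun k => (k:ℤ) - n)) (measurableSet_singleton r))
  have hdisj : Pairwise (Function.onFun Disjoint G) := by
    intro n n' hnn'
    rcases lt_or_gt_of_ne hnn' with h | h
    · apply Set.disjoint_left.2
      rintro ω ⟨h1, h2⟩ ⟨h3, h4⟩
      exact ctd_disj D' j ω r n n' h h1 h2 h4
    · apply Set.disjoint_left.2
      rintro ω ⟨h1, h2⟩ ⟨h3, h4⟩
      exact ctd_disj D' j ω r n' n h h3 h4 h2
  rw [← measure_iUnion hdisj hGmeas]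
  have hae : ∀ᵐ ω ∂ℙ, ω ∈ ⋃ n, G n := by
    filter_upwards [no_min ℙ D' j hmeas hstat hinfj] with ω hdown
    obtain ⟨n, h1, h2⟩ := ctd_cover D' j ω hdown r
    exact Set.mem_iUnion.2 ⟨n, h1, h2⟩
  rw [← prob_compl_eq_zero_iff (MeasurableSet.iUnion hGmeas), Set.compl_def]
  exact MeasureTheory.ae_iff.1 hae



lemma key_integral (hmeas : ∀ i, Measurable (D' i))
    (hstat : ∀ n : ℤ,
      Measure.map (fun ω => fun i => D' (i + n) ω) ℙ
        = Measure.map (fun ω => fun i => D' i ω) ℙ)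
    (hinfj : ∀ᵐ ω ∂ℙ, {i : ℤ | j ≤ D' i ω}.Infinite) (hj1 : 1 ≤ j) :
    ∫⁻ ω in {ω | j ≤ D' 0 ω}, ((ctN D' j (2*j-1) ω : ℕ) : ℝ≥0∞) ∂ℙ
      = ((2*j-1 : ℕ) : ℝ≥0∞) := by
  set m := 2*j-1 with hm
  have hm1 : 1 ≤ m := by omega
  have hAmeas : MeasurableSet {ω | j ≤ D' 0 ω} := meas_setX D' j hmeas 0
  set T : ℕ → Set Ω := fun n => {ω | ctc D' j n ω < m} with hT
  have hTmeas : ∀ n, MeasurableSet (T n) := fun n =>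
    (meas_card D' j hmeas _ (fun k => (k:ℤ))) measurableSet_Iio
  have hup := no_max ℙ D' j hmeas hstat hinfj
  have haeiff : ∀ᵐ ω ∂ℙ, ∀ n : ℕ, ((n < ctN D' j m ω) ↔ ω ∈ T n) := by
    filter_upwards [hup] with ω h n
    exact ctN_lt_iff D' j ω m hm1 h n
  have hpt : ∀ ω, (((ctN D' j m ω) : ℝ≥0∞))
      = ∑' n : ℕ, if n < ctN D' j m ω then (1:ℝ≥0∞) else 0 := by
    intro ω
    rw [tsum_eq_sum (s := Finset.range (ctN D' j m ω))
      (by intro n hn; rw [if_neg]; simp only [Finset.mem_range] at hn; omega)]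
    rw [Finset.sum_congr rfl (fun n hn => if_pos (Finset.mem_range.1 hn))]
    simp
  have hdecomp : ∀ n, ℙ (T n ∩ {ω | j ≤ D' 0 ω})
      = ∑ r ∈ Finset.range m, ℙ {ω | j ≤ D' 0 ω ∧ ctc D' j n ω = r} := by
    intro n
    have he : T n ∩ {ω | j ≤ D' 0 ω}
        = ⋃ r ∈ Finset.range m, {ω | j ≤ D' 0 ω ∧ ctc D' j n ω = r} := by
      ext ω
      simp only [Set.mem_inter_iff, Set.mem_setOf_eq, Set.mem_iUnion, Finset.mem_range, hT]
      constructor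
      · rintro ⟨h1, h2⟩; exact ⟨ctc D' j n ω, h1, h2, rfl⟩
      · rintro ⟨r, hr, h1, h2⟩; exact ⟨by omega, h1⟩
    rw [he, measure_biUnion_finset ?_ ?_]
    · intro r hr r' hr' hrr'
      apply Set.disjoint_left.2
      rintro ω ⟨_, h2⟩ ⟨_, h4⟩
      exact hrr' (by omega)
    · intro r hr
      exact (meas_setX D' j hmeas 0).inter
        ((meas_card D' j hmeas _ (fun k => (k:ℤ))) (measurableSet_singleton r))
  calc ∫⁻ ω in {ω | j ≤ D' 0 ω}, ((ctN D' j m ω : ℕ) : ℝ≥0∞) ∂ℙ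
      = ∫⁻ ω in {ω | j ≤ D' 0 ω}, ∑' n : ℕ, (T n).indicator (fun _ => (1:ℝ≥0∞)) ω ∂ℙ := by
        apply lintegral_congr_ae
        filter_upwards [ae_restrict_of_ae haeiff] with ω hiff
        rw [hpt ω]
        apply tsum_congr
        intro n
        rw [Set.indicator_apply]
        by_cases h : n < ctN D' j m ω
        · rw [if_pos h, if_pos ((hiff n).1 h)]
        · rw [if_neg h, if_neg (fun hc => h ((hiff n).2 hc))]
    _ = ∑' n : ℕ, ∫⁻ ω in {ω | j ≤ D' 0 ω}, (T n).indicator (fun _ => (1:ℝ≥0∞)) ω ∂ℙ :=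
        lintegral_tsum (fun n => ((measurable_const.indicator (hTmeas n)).aemeasurable))
    _ = ∑' n : ℕ, ℙ (T n ∩ {ω | j ≤ D' 0 ω}) := by
        apply tsum_congr
        intro n
        have h1 : ∫⁻ ω in {ω | j ≤ D' 0 ω}, (T n).indicator (fun _ => (1:ℝ≥0∞)) ω ∂ℙ
            = ∫⁻ _ in T n, (1:ℝ≥0∞) ∂(ℙ.restrict {ω | j ≤ D' 0 ω}) :=
          lintegral_indicator (hTmeas n) _
        rw [h1, setLIntegral_one, Measure.restrict_apply (hTmeas n)]
    _ = ∑' n : ℕ, ∑ r ∈ Finset.range m, ℙ {ω | j ≤ D' 0 ω ∧ ctc D' j n ω = r} := by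
        exact tsum_congr hdecomp
    _ = ∑ r ∈ Finset.range m, ∑' n : ℕ, ℙ {ω | j ≤ D' 0 ω ∧ ctc D' j n ω = r} :=
        Summable.tsum_finsetSum (fun r _ => ENNReal.summable)
    _ = ∑ r ∈ Finset.range m, (1 : ℝ≥0∞) := by
        apply Finset.sum_congr rfl
        intro r hr
        rw [tsum_congr (fun n => EG_eq ℙ D' j hmeas hstat n r)]
        exact G_total ℙ D' j hmeas hstat hinfj r
    _ = ((m : ℕ) : ℝ≥0∞) := by simp


lemma meas_ctN (hmeas : ∀ i, Measurable (D' i)) (m : ℕ) (hm : 1 ≤ m) :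
    Measurable (ctN D' j m) := by
  have hSm : ∀ i : ℕ, MeasurableSet {ω | 0 < i ∧ ctc D' j i ω = m} := by
    intro i
    by_cases hi : 0 < i
    · have he : {ω | 0 < i ∧ ctc D' j i ω = m} = (fun ω => ctc D' j i ω) ⁻¹' {m} := by
        ext ω; simp [hi]
      rw [he]
      exact (meas_card D' j hmeas _ (fun k => (k:ℤ))) (measurableSet_singleton m)
    · have he : {ω | 0 < i ∧ ctc D' j i ω = m} = ∅ := by ext ω; simp [hi]
      rw [he]; exact MeasurableSet.empty
  apply measurable_to_countable'
  intro k
  cases k with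
  | zero =>
      have he : ctN D' j m ⁻¹' {0} = ⋂ i : ℕ, {ω | 0 < i ∧ ctc D' j i ω = m}ᶜ := by
        ext ω
        simp only [Set.mem_preimage, Set.mem_singleton_iff, Set.mem_iInter,
          Set.mem_compl_iff, Set.mem_setOf_eq]
        constructor
        · intro h i hi
          rcases Nat.sInf_eq_zero.1 h with h0 | h0
          · exact absurd h0.1 (lt_irrefl 0)
          · have : i ∈ {i : ℕ | 0 < i ∧ ctc D' j i ω = m} := hi
            rw [h0] at this
            exact this
        · intro h
          unfold ctN
          have : {i : ℕ | 0 < i ∧ ctc D' j i ω = m} = ∅ :=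
            Set.eq_empty_iff_forall_notMem.2 h
          rw [this, Nat.sInf_empty]
      rw [he]
      exact MeasurableSet.iInter (fun i => (hSm i).compl)
  | succ k' =>
      have he : ctN D' j m ⁻¹' {k'+1} = {ω | 0 < (k'+1) ∧ ctc D' j (k'+1) ω = m} ∩
          ⋂ i : ℕ, ⋂ (_ : i < k'+1), {ω | 0 < i ∧ ctc D' j i ω = m}ᶜ := by
        ext ω
        simp only [Set.mem_preimage, Set.mem_singleton_iff, Set.mem_inter_iff,
          Set.mem_iInter, Set.mem_compl_iff, Set.mem_setOf_eq]
        constructor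
        · intro h
          have hne : {i : ℕ | 0 < i ∧ ctc D' j i ω = m}.Nonempty := by
            by_contra hc
            rw [Set.not_nonempty_iff_eq_empty] at hc
            unfold ctN at h
            rw [hc, Nat.sInf_empty] at h
            omega
          constructor
          · have := Nat.sInf_mem hne
            rw [show sInf {i : ℕ | 0 < i ∧ ctc D' j i ω = m} = ctN D' j m ω from rfl, h] at this
            exact this
          · intro i hi
            have := Nat.notMem_of_lt_sInf (s := {i : ℕ | 0 < i ∧ ctc D' j i ω = m})
              (by rw [show sInf {i : ℕ | 0 < i ∧ ctc D' j i ω = m} = ctN D' j m ω from rfl, h]; exact hi)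
            exact this
        · rintro ⟨h1, h2⟩
          have hle : ctN D' j m ω ≤ k'+1 := Nat.sInf_le h1
          rcases Nat.lt_or_ge (ctN D' j m ω) (k'+1) with h | h
          · exfalso
            have hmem := Nat.sInf_mem (⟨k'+1, h1⟩ :
              {i : ℕ | 0 < i ∧ ctc D' j i ω = m}.Nonempty)
            exact h2 _ h hmem
          · omega
      rw [he]
      exact (hSm _).inter (MeasurableSet.iInter fun i =>
        MeasurableSet.iInter fun _ => (hSm i).compl)

lemma sum_odd_nat : ∀ u : ℕ, ∑ j ∈ Finset.Icc 1 u, (2*j-1) = u^2 := by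
  intro u
  induction u with
  | zero => simp
  | succ v ih =>
      rw [Finset.sum_Icc_succ_top (by omega : 1 ≤ v + 1), ih]
      have h1 : 2*(v+1)-1 = 2*v+1 := by omega
      rw [h1]
      ring

end CT4

/-- Proposition 3 of the paper: in the CT model applied to a stationary bounded
degree sequence, each level-j edge has conditional mean length (2j−1)/p_j⁺ and
the expected total edge length at the origin is at most u². -/
theorem stmt16 {Ω : Type*} [MeasurableSpace Ω] (ℙ : Measure Ω) [IsProbabilityMeasure ℙ]
    (D' : ℤ → Ω → ℕ) (hmeas : ∀ i, Measurable (D' i))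
    (hstat : ∀ n : ℤ,
      Measure.map (fun ω => fun i => D' (i + n) ω) ℙ
        = Measure.map (fun ω => fun i => D' i ω) ℙ)
    (u : ℕ) (hbd : ∀ i ω, D' i ω ≤ u)
    (hpos : ∀ j, 1 ≤ j → j ≤ u → 0 < ℙ {ω | j ≤ D' 0 ω})
    (hinf : ∀ j, 1 ≤ j → j ≤ u → ∀ᵐ ω ∂ℙ, {i : ℤ | j ≤ D' i ω}.Infinite)
    (K : ℕ → Ω → ℕ)
    (hK0 : ∀ j ω, D' 0 ω < j → K j ω = 0)
    (hK : ∀ j ω, j ≤ D' 0 ω → K j ω =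
      sInf {i : ℕ | 0 < i ∧
        ((Finset.Icc 1 i).filter fun k : ℕ => j ≤ D' ((k : ℤ)) ω).card = 2 * j - 1}) :
    (∀ j, 1 ≤ j → j ≤ u →
      (∫⁻ ω in {ω | j ≤ D' 0 ω}, (K j ω : ℝ≥0∞) ∂ℙ) / ℙ {ω | j ≤ D' 0 ω}
        = (2 * j - 1 : ℕ) / ℙ {ω | j ≤ D' 0 ω}) ∧
    ∫⁻ ω, (∑ j ∈ Finset.Icc 1 u, (K j ω : ℝ≥0∞)) ∂ℙ ≤ (u : ℝ≥0∞) ^ 2 := by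
  have hKeq : ∀ j, K j = fun ω => if j ≤ D' 0 ω then ctN D' j (2*j-1) ω else 0 := by
    intro j
    funext ω
    by_cases h : j ≤ D' 0 ω
    · rw [if_pos h, hK j ω h]
      rfl
    · rw [if_neg h, hK0 j ω (by omega)]
  have hmain : ∀ j, 1 ≤ j → j ≤ u →
      ∫⁻ ω in {ω | j ≤ D' 0 ω}, (K j ω : ℝ≥0∞) ∂ℙ = ((2*j-1 : ℕ) : ℝ≥0∞) := by
    intro j hj1 hju
    have he : ∫⁻ ω in {ω | j ≤ D' 0 ω}, (K j ω : ℝ≥0∞) ∂ℙ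
        = ∫⁻ ω in {ω | j ≤ D' 0 ω}, ((ctN D' j (2*j-1) ω : ℕ) : ℝ≥0∞) ∂ℙ := by
      apply setLIntegral_congr_fun (meas_setX D' j hmeas 0)
      intro ω hω
      rw [hKeq j]
      simp only [Set.mem_setOf_eq] at hω
      simp only [if_pos hω]
    rw [he]
    exact key_integral ℙ D' j hmeas hstat (hinf j hj1 hju) hj1
  constructor
  · intro j hj1 hju
    rw [hmain j hj1 hju]
  · have hKmeas : ∀ j, 1 ≤ j → j ≤ u → Measurable (fun ω => (K j ω : ℝ≥0∞)) := by
      intro j hj1 hju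
      have h1 : Measurable (K j) := by
        rw [hKeq j]
        exact Measurable.ite (meas_setX D' j hmeas 0)
          (meas_ctN D' j hmeas (2*j-1) (by omega)) measurable_const
      exact Measurable.comp (measurable_from_top) h1
    calc ∫⁻ ω, (∑ j ∈ Finset.Icc 1 u, (K j ω : ℝ≥0∞)) ∂ℙ
        = ∑ j ∈ Finset.Icc 1 u, ∫⁻ ω, (K j ω : ℝ≥0∞) ∂ℙ :=
          lintegral_finset_sum _ (fun j hj =>
            hKmeas j (Finset.mem_Icc.1 hj).1 (Finset.mem_Icc.1 hj).2)
      _ = ∑ j ∈ Finset.Icc 1 u, ((2*j-1 : ℕ) : ℝ≥0∞) := by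
          apply Finset.sum_congr rfl
          intro j hj
          obtain ⟨hj1, hju⟩ := Finset.mem_Icc.1 hj
          have hpt : ∀ ω, ((K j ω : ℕ) : ℝ≥0∞)
              = {ω | j ≤ D' 0 ω}.indicator (fun ω => ((K j ω : ℕ) : ℝ≥0∞)) ω := by
            intro ω
            by_cases h : j ≤ D' 0 ω
            · rw [Set.indicator_of_mem (show ω ∈ {ω | j ≤ D' 0 ω} from h)]
            · rw [Set.indicator_of_notMem (show ω ∉ {ω | j ≤ D' 0 ω} from h),
                hK0 j ω (by omega), Nat.cast_zero]
          calc ∫⁻ ω, ((K j ω : ℕ) : ℝ≥0∞) ∂ℙ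
              = ∫⁻ ω, {ω | j ≤ D' 0 ω}.indicator (fun ω => ((K j ω : ℕ) : ℝ≥0∞)) ω ∂ℙ :=
                lintegral_congr hpt
            _ = ∫⁻ ω in {ω | j ≤ D' 0 ω}, ((K j ω : ℕ) : ℝ≥0∞) ∂ℙ :=
                lintegral_indicator (meas_setX D' j hmeas 0) _
            _ = ((2*j-1 : ℕ) : ℝ≥0∞) := hmain j hj1 hju
      _ = ((∑ j ∈ Finset.Icc 1 u, (2*j-1) : ℕ) : ℝ≥0∞) := by rw [Nat.cast_sum]
      _ ≤ (u : ℝ≥0∞)^2 := le_of_eq (by rw [sum_odd_nat u]; push_cast; ring)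
end
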